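/- Let a : ℕ → ℕ (indexed from 1) satisfy: a(1) = 1, a(2) = 2, and for every n ≥ 2, a(n+1) is the smallest positive integer not among a(1), …, a(n) whose greatest common divisor with a(n) exceeds 1. If p is a prime such that infinitely many terms of the sequence are multiples of p, then every positive multiple of p occurs as a term of the sequence. -/
import Mathlib


/-- The EKG sequence property: `a 1 = 1`, `a 2 = 2`, and for `n ≥ 2`,
`a (n+1)` is the smallest positive integer not among `a 1, …, a n`
whose gcd with `a n` exceeds 1. -/
def IsEKG (a : ℕ → ℕ) : Prop :=
  a 1 = 1 ∧ a 2 = 2 ∧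
    ∀ n, 2 ≤ n →
      IsLeast {m : ℕ | 0 < m ∧ (∀ i, 1 ≤ i → i ≤ n → a i ≠ m) ∧
        1 < Nat.gcd m (a n)} (a (n + 1))

theorem ekg_all_multiples_of_p (a : ℕ → ℕ) (ha : IsEKG a) (p : ℕ) (hp : p.Prime)
    (hinf : {n : ℕ | 1 ≤ n ∧ p ∣ a n}.Infinite) :
    ∀ k : ℕ, 1 ≤ k → ∃ n : ℕ, 1 ≤ n ∧ a n = k * p := by
  obtain ⟨h1, h2, h3⟩ := ha
  intro k hk
  by_contra hno
  push_neg at hno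
  set m := k * p with hmdef
  have hm : 0 < m := Nat.mul_pos hk hp.pos
  -- the set of indices n ≥ 2 with p ∣ a n is infinite
  have hS : {n : ℕ | 2 ≤ n ∧ p ∣ a n}.Infinite := by
    apply (hinf.diff (Set.finite_singleton 1)).mono
    rintro n ⟨⟨hn1, hpd⟩, hne⟩
    simp only [Set.mem_singleton_iff] at hne
    exact ⟨by omega, hpd⟩
  -- for such n, a (n+1) < m
  have key : ∀ n ∈ {n : ℕ | 2 ≤ n ∧ p ∣ a n}, a (n + 1) < m := by
    rintro n ⟨hn2, hpd⟩
    have hmem : m ∈ {m : ℕ | 0 < m ∧ (∀ i, 1 ≤ i → i ≤ n → a i ≠ m) ∧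
        1 < Nat.gcd m (a n)} := by
      refine ⟨hm, fun i hi1 hin => hno i hi1, ?_⟩
      have hpg : p ∣ Nat.gcd m (a n) := Nat.dvd_gcd (dvd_mul_left p k) hpd
      have hgpos : 0 < Nat.gcd m (a n) := Nat.gcd_pos_of_pos_left _ hm
      have := Nat.le_of_dvd hgpos hpg
      have := hp.two_le
      omega
    have hle : a (n + 1) ≤ m := (h3 n hn2).2 hmem
    have hne : a (n + 1) ≠ m := hno (n + 1) (by omega)
    omega
  -- n ↦ a (n+1) is injective on that set
  have hinj : Set.InjOn (fun n => a (n + 1)) {n : ℕ | 2 ≤ n ∧ p ∣ a n} := by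
    rintro n₁ ⟨hn₁, _⟩ n₂ ⟨hn₂, _⟩ heq
    by_contra hne
    rcases Nat.lt_or_ge n₁ n₂ with h | h
    · have := ((h3 n₂ hn₂).1.2.1 (n₁ + 1) (by omega) (by omega))
      exact this heq
    · have hlt : n₂ < n₁ := by omega
      have := ((h3 n₁ hn₁).1.2.1 (n₂ + 1) (by omega) (by omega))
      exact this heq.symm
  -- image is infinite but contained in the finite set Iio m
  have himg : ((fun n => a (n + 1)) '' {n : ℕ | 2 ≤ n ∧ p ∣ a n}).Infinite :=
    hS.image hinj
  apply himg
  apply (Set.finite_Iio m).subset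
  rintro x ⟨n, hn, rfl⟩
  exact key n hn
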